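/- Let K ≥ 2, a ∈ (0,∞)^K, let Δ := { x ∈ ℝ^{K−1} : x_i > 0 for all i and ∑_{i=1}^{K−1} x_i < 1 }, and for x ∈ Δ write x_K := 1 − ∑_{i=1}^{K−1} x_i. Then ∫_Δ ∏_{j=1}^K x_j^{a_j − 1} dx = ( ∏_{j=1}^K Γ(a_j) ) / Γ( ∑_{j=1}^K a_j ), the integral being with respect to (K−1)-dimensional Lebesgue measure. Consequently, for α ∈ (0,∞)^K with θ := ∑_j α_j and y ∈ ℕ^K, the y-th moment of the Dirichlet density (Γ(θ)/∏_j Γ(α_j)) ∏_{j=1}^K x_j^{α_j−1} on Δ equals (Γ(θ)/Γ(θ+|y|)) ∏_{j=1}^K Γ(α_j+y_j)/Γ(α_j), which is the unnormalised posterior weight appearing in the update formula (3.6) of Proposition 3.2. -/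

import Mathlib

open MeasureTheory Finset
open scoped ENNReal

/-- The open simplex `Δ = {x ∈ ℝ^d : xᵢ > 0, ∑ xᵢ < 1}`. -/
def simplexSet (d : ℕ) : Set (Fin d → ℝ) :=
  {x | (∀ i, 0 < x i) ∧ ∑ i, x i < 1}

/-- Extension of `x ∈ ℝ^{K-1}` to `ℝ^K` by appending `x_K := 1 - ∑_{i<K} x_i`. -/
noncomputable def extFun (K : ℕ) (x : Fin (K - 1) → ℝ) (j : Fin K) : ℝ :=
  if h : (j : ℕ) < K - 1 then x ⟨j, h⟩ else 1 - ∑ i, x i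

lemma betaIntegrable {p q c : ℝ} (hp : 0 < p) (hq : 0 < q) (hc : 0 < c) :
    IntervalIntegrable (fun t => t ^ (p - 1) * (c - t) ^ (q - 1)) volume 0 c := by
  apply IntervalIntegrable.trans (b := c / 2)
  · apply IntervalIntegrable.mul_continuousOn
    · exact intervalIntegral.intervalIntegrable_rpow' (by linarith)
    · apply ContinuousOn.rpow_const (by fun_prop)
      rw [Set.uIcc_of_le (by linarith)]
      rintro x ⟨hx0, hx1⟩
      left; intro h; nlinarith
  · apply IntervalIntegrable.continuousOn_mul
    · have h := (intervalIntegral.intervalIntegrable_rpow'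
        (r := q - 1) (by linarith) (a := (c/2)) (b := 0)).comp_sub_left c
      simpa [show c - c/2 = c/2 by ring] using h
    · apply ContinuousOn.rpow_const (by fun_prop)
      rw [Set.uIcc_of_le (by linarith)]
      rintro x ⟨hx0, hx1⟩
      left; intro h; nlinarith

lemma betaEval {p q c : ℝ} (hp : 0 < p) (hq : 0 < q) (hc : 0 < c) :
    ∫ t in (0:ℝ)..c, t ^ (p - 1) * (c - t) ^ (q - 1)
      = c ^ (p + q - 1) * (Real.Gamma p * Real.Gamma q / Real.Gamma (p + q)) := by
  have hB : Complex.betaIntegral p q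
      = ((Real.Gamma p * Real.Gamma q / Real.Gamma (p + q) : ℝ) : ℂ) := by
    have h := Complex.Gamma_mul_Gamma_eq_betaIntegral (s := (p:ℂ)) (t := (q:ℂ))
      (by simpa using hp) (by simpa using hq)
    have hpq : ((p:ℂ) + q) = ((p + q : ℝ) : ℂ) := by push_cast; ring
    rw [hpq, Complex.Gamma_ofReal, Complex.Gamma_ofReal, Complex.Gamma_ofReal] at h
    have hne : ((Real.Gamma (p + q) : ℂ)) ≠ 0 := by
      simp only [ne_eq, Complex.ofReal_eq_zero]
      exact (Real.Gamma_pos_of_pos (by linarith)).ne'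
    push_cast
    rw [eq_div_iff hne]
    linear_combination -h
  have hs := Complex.betaIntegral_scaled (p:ℂ) (q:ℂ) hc
  have hconv : (∫ x in (0:ℝ)..c, (x:ℂ) ^ ((p:ℂ) - 1) * ((c:ℂ) - x) ^ ((q:ℂ) - 1))
      = ((∫ t in (0:ℝ)..c, t ^ (p - 1) * (c - t) ^ (q - 1) : ℝ) : ℂ) := by
    rw [← intervalIntegral.integral_ofReal]
    apply intervalIntegral.integral_congr
    intro x hx
    rw [Set.uIcc_of_le hc.le] at hx
    obtain ⟨hx0, hx1⟩ := hx
    push_cast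
    rw [Complex.ofReal_cpow hx0, Complex.ofReal_cpow (by linarith)]
    push_cast
    ring
  rw [hconv, hB] at hs
  have hcc : ((c:ℂ)) ^ ((p:ℂ) + q - 1) = ((c ^ (p + q - 1) : ℝ) : ℂ) := by
    rw [Complex.ofReal_cpow hc.le]
    push_cast; ring_nf
  rw [hcc, ← Complex.ofReal_mul] at hs
  exact_mod_cast hs

lemma measurableSet_simplexSet (d : ℕ) : MeasurableSet (simplexSet d) := by
  have : simplexSet d = (⋂ i, {x : Fin d → ℝ | 0 < x i}) ∩ {x | ∑ i, x i < 1} := by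
    ext x; simp [simplexSet, Set.mem_iInter]
  rw [this]
  exact (MeasurableSet.iInter fun i =>
      measurableSet_lt measurable_const (measurable_pi_apply i)).inter
    (measurableSet_lt (by fun_prop) measurable_const)

lemma betaLintegral {p q c : ℝ} (hp : 0 < p) (hq : 0 < q) (hc : 0 < c) :
    ∫⁻ t in Set.Ioo 0 c, ENNReal.ofReal (t ^ (p - 1) * (c - t) ^ (q - 1))
      = ENNReal.ofReal (c ^ (p + q - 1) * (Real.Gamma p * Real.Gamma q / Real.Gamma (p + q))) := by
  have hI : IntegrableOn (fun t => t ^ (p - 1) * (c - t) ^ (q - 1)) (Set.Ioc 0 c) volume :=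
    (intervalIntegrable_iff_integrableOn_Ioc_of_le hc.le).mp (betaIntegrable hp hq hc)
  have hnn : 0 ≤ᵐ[volume.restrict (Set.Ioc 0 c)]
      fun t => t ^ (p - 1) * (c - t) ^ (q - 1) := by
    filter_upwards [ae_restrict_mem measurableSet_Ioc] with t ht
    exact mul_nonneg (Real.rpow_nonneg ht.1.le _) (Real.rpow_nonneg (by linarith [ht.2]) _)
  rw [setLIntegral_congr MeasureTheory.Ioo_ae_eq_Ioc,
    ← ofReal_integral_eq_lintegral_ofReal hI hnn,
    ← intervalIntegral.integral_of_le hc.le, betaEval hp hq hc]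

lemma dirichlet_lintegral : ∀ (d : ℕ) (b : Fin (d + 1) → ℝ), (∀ j, 0 < b j) →
    ∫⁻ x in simplexSet d, ENNReal.ofReal
        ((∏ i, x i ^ (b i.castSucc - 1)) * (1 - ∑ i, x i) ^ (b (Fin.last d) - 1))
      = ENNReal.ofReal ((∏ j, Real.Gamma (b j)) / Real.Gamma (∑ j, b j)) := by
  intro d
  induction d with
  | zero =>
    intro b hb
    have hS : simplexSet 0 = Set.univ := by
      ext x; simp [simplexSet]
    rw [hS, Measure.restrict_univ]
    simp only [Finset.univ_eq_empty, Finset.prod_empty, Finset.sum_empty, one_mul, sub_zero]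
    rw [lintegral_const]
    rw [show (volume : Measure (Fin 0 → ℝ)) = Measure.pi (fun _ => volume) from rfl,
      Measure.pi_univ]
    simp [Real.one_rpow, div_self (Real.Gamma_pos_of_pos (hb 0)).ne']
  | succ d IH =>
    intro b hb
    classical
    set p := b ((Fin.last d).castSucc) with hp_def
    set q := b (Fin.last (d + 1)) with hq_def
    have hp : 0 < p := hb _
    have hq : 0 < q := hb _
    have hΓpq : (0:ℝ) < Real.Gamma (p + q) := Real.Gamma_pos_of_pos (by linarith)
    set B := Real.Gamma p * Real.Gamma q / Real.Gamma (p + q) with hB_def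
    have hBnn : 0 ≤ B := by positivity
    set b' : Fin (d + 1) → ℝ :=
      Fin.snoc (fun i : Fin d => b i.castSucc.castSucc) (p + q) with hb'_def
    have hb'pos : ∀ j, 0 < b' j := by
      intro j
      induction j using Fin.lastCases with
      | last => rw [hb'_def, Fin.snoc_last]; positivity
      | cast i => rw [hb'_def, Fin.snoc_castSucc]; exact hb _
    have hgmeas : Measurable fun x : Fin (d + 1) → ℝ =>
        ENNReal.ofReal ((∏ i, x i ^ (b i.castSucc - 1)) *
          (1 - ∑ i, x i) ^ (b (Fin.last (d + 1)) - 1)) := by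
      fun_prop
    set e := MeasurableEquiv.piFinSuccAbove (fun _ : Fin (d + 1) => ℝ) (Fin.last d) with he
    have hpres := MeasureTheory.volume_preserving_piFinSuccAbove
      (fun _ : Fin (d + 1) => ℝ) (Fin.last d)
    set F : (Fin (d + 1) → ℝ) → ℝ≥0∞ := (simplexSet (d + 1)).indicator
      (fun x => ENNReal.ofReal ((∏ i, x i ^ (b i.castSucc - 1)) *
        (1 - ∑ i, x i) ^ (b (Fin.last (d + 1)) - 1))) with hF
    have hFmeas : Measurable F := hgmeas.indicator (measurableSet_simplexSet _)
    have hsnoc : ∀ (t : ℝ) (x' : Fin d → ℝ), e.symm (t, x') = Fin.snoc x' t := by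
      intro t x'
      rw [he]
      show (Fin.insertNthEquiv (fun _ => ℝ) (Fin.last d)) (t, x') = Fin.snoc x' t
      simp [Fin.insertNthEquiv, Fin.insertNth_last']
    have hmem : ∀ (t : ℝ) (x' : Fin d → ℝ), Fin.snoc x' t ∈ simplexSet (d + 1) ↔
        ((∀ i, 0 < x' i) ∧ t ∈ Set.Ioo 0 (1 - ∑ i, x' i)) := by
      intro t x'
      constructor
      · rintro ⟨hpos, hsum⟩
        rw [Fin.sum_univ_castSucc] at hsum
        simp only [Fin.snoc_castSucc, Fin.snoc_last] at hsum
        have ht := hpos (Fin.last d)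
        rw [Fin.snoc_last] at ht
        refine ⟨fun i => ?_, ht, by linarith⟩
        have := hpos i.castSucc
        rwa [Fin.snoc_castSucc] at this
      · rintro ⟨hpos, ht0, ht1⟩
        constructor
        · intro i
          induction i using Fin.lastCases with
          | last => rwa [Fin.snoc_last]
          | cast i => rw [Fin.snoc_castSucc]; exact hpos i
        · rw [Fin.sum_univ_castSucc]
          simp only [Fin.snoc_castSucc, Fin.snoc_last]
          linarith
    have hinner : ∀ x' : Fin d → ℝ, (∫⁻ t : ℝ, F (e.symm (t, x')))
        = (simplexSet d).indicator (fun x' => ENNReal.ofReal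
            ((∏ i, x' i ^ (b i.castSucc.castSucc - 1)) *
              (1 - ∑ i, x' i) ^ (p + q - 1))) x' * ENNReal.ofReal B := by
      intro x'
      by_cases hx' : x' ∈ simplexSet d
      · obtain ⟨hpos, hsum⟩ := hx'
        have hc : (0:ℝ) < 1 - ∑ i, x' i := by linarith
        have hCnn : 0 ≤ ∏ i, x' i ^ (b i.castSucc.castSucc - 1) :=
          Finset.prod_nonneg fun i _ => Real.rpow_nonneg (hpos i).le _
        have hval : ∀ t : ℝ, F (e.symm (t, x')) =
            (Set.Ioo 0 (1 - ∑ i, x' i)).indicator (fun t => ENNReal.ofReal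
              ((∏ i, x' i ^ (b i.castSucc.castSucc - 1)) *
                (t ^ (p - 1) * ((1 - ∑ i, x' i) - t) ^ (q - 1)))) t := by
          intro t
          rw [hsnoc, hF]
          rw [Set.indicator_apply, Set.indicator_apply]
          have hiff := hmem t x'
          have hiff2 : Fin.snoc x' t ∈ simplexSet (d + 1) ↔
              t ∈ Set.Ioo 0 (1 - ∑ i, x' i) := by
            rw [hiff]; exact and_iff_right hpos
          rw [if_congr hiff2 rfl rfl]
          split_ifs with h
          · congr 1
            rw [Fin.prod_univ_castSucc, Fin.sum_univ_castSucc]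
            simp only [Fin.snoc_castSucc, Fin.snoc_last]
            have h1 : (1 : ℝ) - (∑ i, x' i + t) = (1 - ∑ i, x' i) - t := by ring
            rw [h1]
            ring
          · rfl
        rw [lintegral_congr hval, lintegral_indicator measurableSet_Ioo]
        simp_rw [ENNReal.ofReal_mul hCnn]
        rw [lintegral_const_mul' _ _ ENNReal.ofReal_ne_top, betaLintegral hp hq hc]
        rw [Set.indicator_of_mem (show x' ∈ simplexSet d from ⟨hpos, hsum⟩)]
        rw [ENNReal.ofReal_mul (by positivity : (0:ℝ) ≤ (1 - ∑ i, x' i) ^ (p + q - 1)),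
          ENNReal.ofReal_mul hCnn, mul_assoc]
      · have hval : ∀ t : ℝ, F (e.symm (t, x')) = 0 := by
          intro t
          rw [hsnoc, hF, Set.indicator_of_notMem]
          intro hmem'
          obtain ⟨hpos, ht⟩ := (hmem t x').mp hmem'
          refine hx' ⟨hpos, ?_⟩
          have h1 := ht.1
          have h2 := ht.2
          linarith
        rw [lintegral_congr hval, lintegral_zero, Set.indicator_of_notMem hx', zero_mul]
    calc ∫⁻ x in simplexSet (d + 1), ENNReal.ofReal
          ((∏ i, x i ^ (b i.castSucc - 1)) * (1 - ∑ i, x i) ^ (b (Fin.last (d + 1)) - 1))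
        = ∫⁻ x, F x := (lintegral_indicator (measurableSet_simplexSet _) _).symm
      _ = ∫⁻ z : ℝ × (Fin d → ℝ), F (e.symm z) := ((hpres.symm e).lintegral_comp hFmeas).symm
      _ = ∫⁻ x' : Fin d → ℝ, ∫⁻ t : ℝ, F (e.symm (t, x')) := by
          rw [MeasureTheory.Measure.volume_eq_prod]
          exact lintegral_prod_symm _ (hFmeas.comp e.symm.measurable).aemeasurable
      _ = ∫⁻ x' : Fin d → ℝ, (simplexSet d).indicator (fun x' => ENNReal.ofReal
            ((∏ i, x' i ^ (b i.castSucc.castSucc - 1)) *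
              (1 - ∑ i, x' i) ^ (p + q - 1))) x' * ENNReal.ofReal B :=
          lintegral_congr hinner
      _ = (∫⁻ x' in simplexSet d, ENNReal.ofReal
            ((∏ i, x' i ^ (b i.castSucc.castSucc - 1)) *
              (1 - ∑ i, x' i) ^ (p + q - 1))) * ENNReal.ofReal B := by
          rw [lintegral_mul_const' _ _ ENNReal.ofReal_ne_top,
            lintegral_indicator (measurableSet_simplexSet _)]
      _ = ENNReal.ofReal ((∏ j, Real.Gamma (b' j)) / Real.Gamma (∑ j, b' j))
            * ENNReal.ofReal B := by
          rw [← IH b' hb'pos]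
          congr 1
          apply lintegral_congr
          intro x'
          congr 2
          · exact Finset.prod_congr rfl fun i _ => by rw [hb'_def, Fin.snoc_castSucc]
          · rw [hb'_def, Fin.snoc_last]
      _ = ENNReal.ofReal ((∏ j, Real.Gamma (b j)) / Real.Gamma (∑ j, b j)) := by
          have hb'sum : (0:ℝ) < ∑ j, b' j :=
            Finset.sum_pos (fun j _ => hb'pos j) Finset.univ_nonempty
          have hXnn : 0 ≤ (∏ j, Real.Gamma (b' j)) / Real.Gamma (∑ j, b' j) :=
            div_nonneg (Finset.prod_nonneg fun j _ => (Real.Gamma_pos_of_pos (hb'pos j)).le)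
              (Real.Gamma_pos_of_pos hb'sum).le
          rw [← ENNReal.ofReal_mul hXnn]
          congr 1
          have hsum' : ∑ j, b' j = ∑ j, b j := by
            rw [Fin.sum_univ_castSucc (n := d + 1), Fin.sum_univ_castSucc (n := d)]
            rw [hb'_def, Fin.sum_univ_castSucc (n := d)]
            simp only [Fin.snoc_castSucc, Fin.snoc_last]
            ring
          have hprod : ∏ j, Real.Gamma (b' j)
              = (∏ i : Fin d, Real.Gamma (b i.castSucc.castSucc)) * Real.Gamma (p + q) := by
            rw [Fin.prod_univ_castSucc (n := d), hb'_def]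
            simp only [Fin.snoc_castSucc, Fin.snoc_last]
          have hprodb : ∏ j, Real.Gamma (b j)
              = (∏ i : Fin d, Real.Gamma (b i.castSucc.castSucc)) *
                Real.Gamma p * Real.Gamma q := by
            rw [Fin.prod_univ_castSucc (n := d + 1), Fin.prod_univ_castSucc (n := d)]
          have hSpos : (0:ℝ) < Real.Gamma (∑ j : Fin (d + 1 + 1), b j) :=
            Real.Gamma_pos_of_pos (Finset.sum_pos (fun j _ => hb j) Finset.univ_nonempty)
          rw [hsum', hprod, hprodb, hB_def]
          field_simp


lemma extFun_eq (d : ℕ) (x : Fin d → ℝ) :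
    extFun (d + 1) x = Fin.snoc x (1 - ∑ i, x i) := by
  funext j
  induction j using Fin.lastCases with
  | last =>
    rw [Fin.snoc_last, extFun]
    simp
  | cast i =>
    rw [Fin.snoc_castSucc, extFun]
    rw [dif_pos (show ((i.castSucc : Fin (d+1)) : ℕ) < d + 1 - 1 from i.isLt)]
    exact congrArg x (Fin.ext (by simp))

lemma extFun_prod (d : ℕ) (x : Fin d → ℝ) (c : Fin (d + 1) → ℝ) :
    ∏ j, extFun (d + 1) x j ^ (c j - 1)
      = (∏ i : Fin d, x i ^ (c i.castSucc - 1)) * (1 - ∑ i, x i) ^ (c (Fin.last d) - 1) := by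
  rw [Fin.prod_univ_castSucc]
  simp [extFun_eq, Fin.snoc_castSucc, Fin.snoc_last]

lemma extFun_pos {d : ℕ} {x : Fin d → ℝ} (hx : x ∈ simplexSet d) (j : Fin (d + 1)) :
    0 < extFun (d + 1) x j := by
  obtain ⟨h1, h2⟩ := hx
  rw [extFun_eq]
  induction j using Fin.lastCases with
  | last => rw [Fin.snoc_last]; linarith
  | cast i => rw [Fin.snoc_castSucc]; exact h1 i

lemma dirichlet_integral (d : ℕ) (a : Fin (d + 1) → ℝ) (ha : ∀ j, 0 < a j) :
    ∫ x in simplexSet d, ∏ j, extFun (d + 1) x j ^ (a j - 1)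
      = (∏ j, Real.Gamma (a j)) / Real.Gamma (∑ j, a j) := by
  have hfun : (fun x : Fin d → ℝ => ∏ j, extFun (d + 1) x j ^ (a j - 1))
      = fun x => (∏ i : Fin d, x i ^ (a i.castSucc - 1)) *
          (1 - ∑ i, x i) ^ (a (Fin.last d) - 1) := by
    funext x; exact extFun_prod d x a
  rw [hfun]
  have hnn : 0 ≤ᵐ[volume.restrict (simplexSet d)]
      fun x : Fin d → ℝ => (∏ i : Fin d, x i ^ (a i.castSucc - 1)) *
        (1 - ∑ i, x i) ^ (a (Fin.last d) - 1) := by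
    filter_upwards [ae_restrict_mem (measurableSet_simplexSet d)] with x hx
    exact mul_nonneg
      (Finset.prod_nonneg fun i _ => Real.rpow_nonneg (hx.1 i).le _)
      (Real.rpow_nonneg (by linarith [hx.2]) _)
  have hmeas : AEStronglyMeasurable
      (fun x : Fin d → ℝ => (∏ i : Fin d, x i ^ (a i.castSucc - 1)) *
        (1 - ∑ i, x i) ^ (a (Fin.last d) - 1)) (volume.restrict (simplexSet d)) := by
    apply Measurable.aestronglyMeasurable
    fun_prop
  rw [MeasureTheory.integral_eq_lintegral_of_nonneg_ae hnn hmeas,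
    dirichlet_lintegral d a ha]
  apply ENNReal.toReal_ofReal
  have hsum : (0:ℝ) < ∑ j, a j := Finset.sum_pos (fun j _ => ha j) Finset.univ_nonempty
  exact div_nonneg (Finset.prod_nonneg fun j _ => (Real.Gamma_pos_of_pos (ha j)).le)
    (Real.Gamma_pos_of_pos hsum).le

/-- The Dirichlet integral over the open simplex, and consequently the `y`-th moment of the
Dirichlet density, which is the unnormalised posterior weight in the update formula (3.6)
of Proposition 3.2. -/
theorem stmt14 (K : ℕ) (hK : 2 ≤ K) (a : Fin K → ℝ) (ha : ∀ j, 0 < a j) :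
    (∫ x in simplexSet (K - 1), ∏ j, extFun K x j ^ (a j - 1))
      = (∏ j, Real.Gamma (a j)) / Real.Gamma (∑ j, a j)
    ∧ ∀ y : Fin K → ℕ,
      (∫ x in simplexSet (K - 1),
          (Real.Gamma (∑ j, a j) / ∏ j, Real.Gamma (a j)) *
            (∏ j, extFun K x j ^ (a j - 1)) * ∏ j, extFun K x j ^ (y j))
        = Real.Gamma (∑ j, a j) / Real.Gamma ((∑ j, a j) + ∑ j, (y j : ℝ)) *
            ∏ j, (Real.Gamma (a j + y j) / Real.Gamma (a j)) := by
  obtain ⟨d, rfl⟩ : ∃ d, K = d + 1 := ⟨K - 1, by omega⟩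
  constructor
  · exact dirichlet_integral d a ha
  · intro y
    show (∫ x in simplexSet d,
          (Real.Gamma (∑ j, a j) / ∏ j, Real.Gamma (a j)) *
            (∏ j, extFun (d + 1) x j ^ (a j - 1)) * ∏ j, extFun (d + 1) x j ^ (y j))
        = Real.Gamma (∑ j, a j) / Real.Gamma ((∑ j, a j) + ∑ j, (y j : ℝ)) *
            ∏ j, (Real.Gamma (a j + y j) / Real.Gamma (a j))
    set C := Real.Gamma (∑ j, a j) / ∏ j, Real.Gamma (a j) with hC
    set a' : Fin (d + 1) → ℝ := fun j => a j + y j with ha'_def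
    have ha' : ∀ j, 0 < a' j := fun j =>
      add_pos_of_pos_of_nonneg (ha j) (Nat.cast_nonneg _)
    have hcong : Set.EqOn
        (fun x : Fin d → ℝ => C * (∏ j, extFun (d + 1) x j ^ (a j - 1)) *
          ∏ j, extFun (d + 1) x j ^ (y j))
        (fun x : Fin d → ℝ => C * ∏ j, extFun (d + 1) x j ^ (a' j - 1))
        (simplexSet d) := by
      intro x hx
      simp only
      rw [mul_assoc, ← Finset.prod_mul_distrib]
      congr 1
      apply Finset.prod_congr rfl
      intro j _
      have hz := extFun_pos hx j
      rw [← Real.rpow_natCast (extFun (d + 1) x j) (y j), ← Real.rpow_add hz]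
      congr 1
      rw [ha'_def]
      ring
    rw [MeasureTheory.setIntegral_congr_fun (measurableSet_simplexSet d) hcong]
    rw [MeasureTheory.integral_const_mul, dirichlet_integral d a' ha']
    have hsum' : ∑ j, a' j = (∑ j, a j) + ∑ j, (y j : ℝ) := by
      rw [ha'_def, Finset.sum_add_distrib]
    rw [hsum', hC]
    have hΓa : ∀ j, (0:ℝ) < Real.Gamma (a j) := fun j => Real.Gamma_pos_of_pos (ha j)
    have hprodpos : (0:ℝ) < ∏ j, Real.Gamma (a j) :=
      Finset.prod_pos fun j _ => hΓa j
    have hθY : (0:ℝ) < Real.Gamma ((∑ j, a j) + ∑ j, (y j : ℝ)) := by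
      apply Real.Gamma_pos_of_pos
      have : (0:ℝ) < ∑ j, a j := Finset.sum_pos (fun j _ => ha j) Finset.univ_nonempty
      have : (0:ℝ) ≤ ∑ j, (y j : ℝ) := Finset.sum_nonneg fun j _ => Nat.cast_nonneg _
      linarith
    have hprodsplit : ∏ j, (Real.Gamma (a j + y j) / Real.Gamma (a j))
        = (∏ j, Real.Gamma (a j + y j)) / ∏ j, Real.Gamma (a j) :=
      Finset.prod_div_distrib _ _
    rw [hprodsplit]
    have : ∏ j, Real.Gamma (a' j) = ∏ j, Real.Gamma (a j + y j) := rfl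
    rw [this]
    field_simp
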